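/- The function w - η₀ is bounded on [0,∞), where w(r) = η₀(r) + 2r²/(1+r²) - (1/2)η₀(r)² + ((1-r²)/(1+r²))∫₁^{1+r²} (log t)/(1-t) dt and η₀(r) = -log(1+r²). More precisely |w'(r) - η₀'(r)| ≤ C/(1+r²) for all r ≥ 0 and some constant C. -/

import Mathlib

open Real MeasureTheory intervalIntegral


noncomputable def phit : ℝ → ℝ := fun t => if t = 1 then -1 else Real.log t / (1 - t)

lemma phit_meas : Measurable phit := by
  unfold phit
  exact Measurable.ite (by simp [MeasurableSet.singleton]) measurable_const
    (Real.measurable_log.div (measurable_const.sub measurable_id))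

lemma phit_abs_le {t : ℝ} (ht : 1 ≤ t) : |phit t| ≤ 2 / Real.sqrt t := by
  rcases eq_or_lt_of_le ht with h | h
  · simp [phit, ← h]
  · have ht0 : (0:ℝ) < t := by linarith
    have hs : Real.sqrt t * Real.sqrt t = t := Real.mul_self_sqrt ht0.le
    have hs1 : 1 ≤ Real.sqrt t := by
      nlinarith [Real.sqrt_nonneg t]
    have hlog : Real.log t ≤ 2 * (Real.sqrt t - 1) := by
      have h1 : Real.log (Real.sqrt t) ≤ Real.sqrt t - 1 :=
        Real.log_le_sub_one_of_pos (by positivity)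
      have h2 : Real.log (Real.sqrt t) = Real.log t / 2 := Real.log_sqrt ht0.le
      linarith
    have hlogpos : 0 ≤ Real.log t := Real.log_nonneg ht
    have : phit t = -(Real.log t / (t - 1)) := by
      simp only [phit, if_neg (by linarith : t ≠ 1)]
      rw [show (1:ℝ) - t = -(t - 1) by ring, div_neg]
    rw [this, abs_neg, abs_of_nonneg (div_nonneg hlogpos (by linarith))]
    rw [div_le_div_iff₀ (by linarith) (by positivity)]
    nlinarith [Real.sqrt_nonneg t]

lemma phit_contAt {x : ℝ} (hx : 1 ≤ x) : ContinuousAt phit x := by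
  rcases eq_or_lt_of_le hx with h | h
  · subst h
    rw [← continuousWithinAt_compl_self]
    have hslope : Filter.Tendsto (fun t : ℝ => (Real.log t - Real.log 1) / (t - 1))
        (nhdsWithin 1 {(1:ℝ)}ᶜ) (nhds 1) := by
      have h0 := hasDerivAt_iff_tendsto_slope.mp (Real.hasDerivAt_log one_ne_zero)
      refine Filter.Tendsto.congr' ?_ (by simpa using h0)
      filter_upwards with t
      simp [slope_def_field]
    have : Filter.Tendsto phit (nhdsWithin 1 {(1:ℝ)}ᶜ) (nhds (-1)) := by
      have h2 : Filter.Tendsto (fun t : ℝ => -((Real.log t - Real.log 1) / (t - 1)))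
          (nhdsWithin 1 {(1:ℝ)}ᶜ) (nhds (-1)) := hslope.neg
      refine h2.congr' ?_
      filter_upwards [self_mem_nhdsWithin] with t ht
      simp only [Set.mem_compl_iff, Set.mem_singleton_iff] at ht
      have h1 : (1:ℝ) - t ≠ 0 := fun hc => ht (by linarith)
      have h2 : t - (1:ℝ) ≠ 0 := fun hc => ht (by linarith)
      simp only [phit, if_neg ht, Real.log_one, sub_zero]
      field_simp
      ring
    have hval : phit 1 = -1 := by simp [phit]
    rw [ContinuousWithinAt, hval]
    exact this
  · have hne : {t : ℝ | t ≠ 1} ∈ nhds x := by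
      exact isOpen_ne.mem_nhds (ne_of_gt h)
    have heq : (fun t : ℝ => Real.log t / (1 - t)) =ᶠ[nhds x] phit := by
      filter_upwards [hne] with t ht
      simp [phit, if_neg ht]
    refine ContinuousAt.congr ?_ heq
    exact (Real.continuousAt_log (by linarith)).div
      (continuousAt_const.sub continuousAt_id) (by show (1:ℝ) - x ≠ 0; intro hc; linarith)



noncomputable def FF : ℝ → ℝ := fun x => ∫ t in (1:ℝ)..x, phit t

lemma phit_contOn : ContinuousOn phit (Set.Ici 1) :=
  fun t ht => (phit_contAt ht).continuousWithinAt

lemma phit_intble {x : ℝ} (hx : 1 ≤ x) : IntervalIntegrable phit volume 1 x := by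
  apply ContinuousOn.intervalIntegrable
  apply phit_contOn.mono
  rw [Set.uIcc_of_le hx]
  exact Set.Icc_subset_Ici_self

lemma FF_deriv {x : ℝ} (hx : 1 ≤ x) : HasDerivAt FF (phit x) x :=
  intervalIntegral.integral_hasDerivAt_right (phit_intble hx)
    (phit_meas.aestronglyMeasurable.stronglyMeasurableAtFilter) (phit_contAt hx)

lemma sqrt_anti {t : ℝ} (ht : 0 < t) :
    HasDerivAt (fun s => 4 * Real.sqrt s) (2 / Real.sqrt t) t := by
  have h := (Real.hasDerivAt_sqrt (ne_of_gt ht)).const_mul 4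
  refine h.congr_deriv ?_
  have : Real.sqrt t ≠ 0 := by positivity
  field_simp
  ring

lemma FF_abs_le {x : ℝ} (hx : 1 ≤ x) : |FF x| ≤ 4 * Real.sqrt x := by
  have hint : ∫ t in (1:ℝ)..x, 2 / Real.sqrt t = 4 * Real.sqrt x - 4 * Real.sqrt 1 := by
    apply intervalIntegral.integral_eq_sub_of_hasDerivAt
    · intro t ht
      rw [Set.uIcc_of_le hx] at ht
      exact sqrt_anti (by linarith [ht.1])
    · apply ContinuousOn.intervalIntegrable
      intro t ht
      rw [Set.uIcc_of_le hx] at ht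
      have ht0 : (0:ℝ) < t := by linarith [ht.1]
      exact ((continuousAt_const.div (Real.continuous_sqrt.continuousAt)
        (by positivity))).continuousWithinAt
  have habs : |FF x| ≤ |∫ t in (1:ℝ)..x, 2 / Real.sqrt t| := by
    rw [show |FF x| = ‖FF x‖ from rfl]
    apply intervalIntegral.norm_integral_le_abs_of_norm_le
    · rw [Set.uIoc_of_le hx]
      rw [ae_restrict_iff' measurableSet_Ioc]
      filter_upwards with t ht
      exact phit_abs_le ht.1.le
    · apply ContinuousOn.intervalIntegrable
      intro t ht
      rw [Set.uIcc_of_le hx] at ht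
      have ht0 : (0:ℝ) < t := by linarith [ht.1]
      exact ((continuousAt_const.div (Real.continuous_sqrt.continuousAt)
        (by positivity))).continuousWithinAt
  have hx1 : 1 ≤ Real.sqrt x := by
    nlinarith [Real.sq_sqrt (by linarith : (0:ℝ) ≤ x), Real.sqrt_nonneg x]
  rw [hint, Real.sqrt_one] at habs
  calc |FF x| ≤ |4 * Real.sqrt x - 4 * 1| := habs
    _ = 4 * Real.sqrt x - 4 := by rw [abs_of_nonneg (by nlinarith)]; ring
    _ ≤ 4 * Real.sqrt x := by linarith



noncomputable def psi : ℝ → ℝ := fun r =>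
  2 * r ^ 2 / (1 + r ^ 2) - (1 / 2) * (Real.log (1 + r ^ 2)) ^ 2
    + (1 - r ^ 2) / (1 + r ^ 2) * FF (1 + r ^ 2)

noncomputable def DD : ℝ → ℝ := fun r =>
  4 * r / (1 + r ^ 2) ^ 2 - Real.log (1 + r ^ 2) * (2 * r / (1 + r ^ 2))
    + (-(4 * r) / (1 + r ^ 2) ^ 2 * FF (1 + r ^ 2)
      + (1 - r ^ 2) / (1 + r ^ 2) * (phit (1 + r ^ 2) * (2 * r)))

lemma psi_hasDeriv (r : ℝ) : HasDerivAt psi (DD r) r := by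
  have hx0 : (0:ℝ) < 1 + r ^ 2 := by positivity
  have hx1 : (1:ℝ) ≤ 1 + r ^ 2 := by nlinarith
  have hxne : (1:ℝ) + r ^ 2 ≠ 0 := ne_of_gt hx0
  have hden : HasDerivAt (fun r : ℝ => 1 + r ^ 2) (2 * r) r := by
    simpa using (hasDerivAt_pow 2 r).const_add 1
  have h1 : HasDerivAt (fun r : ℝ => 2 * r ^ 2 / (1 + r ^ 2)) (4 * r / (1 + r ^ 2) ^ 2) r := by
    have := ((hasDerivAt_pow 2 r).const_mul 2).div hden hxne
    refine this.congr_deriv ?_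
    field_simp
    ring
  have hlog : HasDerivAt (fun r : ℝ => Real.log (1 + r ^ 2)) ((1 + r ^ 2)⁻¹ * (2 * r)) r :=
    by have := (Real.hasDerivAt_log hxne).comp r hden; exact this
  have h2 : HasDerivAt (fun r : ℝ => (1 / 2) * (Real.log (1 + r ^ 2)) ^ 2)
      (Real.log (1 + r ^ 2) * (2 * r / (1 + r ^ 2))) r := by
    have := (hlog.pow 2).const_mul (1/2 : ℝ)
    refine this.congr_deriv ?_
    field_simp
    ring
  have h3 : HasDerivAt (fun r : ℝ => (1 - r ^ 2) / (1 + r ^ 2)) (-(4 * r) / (1 + r ^ 2) ^ 2) r := by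
    have hnum : HasDerivAt (fun r : ℝ => 1 - r ^ 2) (-(2 * r)) r := by
      simpa [sub_eq_add_neg] using ((hasDerivAt_pow 2 r).const_mul (-1 : ℝ)).const_add 1
    have := hnum.div hden hxne
    refine this.congr_deriv ?_
    field_simp
    ring
  have h4 : HasDerivAt (fun r : ℝ => FF (1 + r ^ 2)) (phit (1 + r ^ 2) * (2 * r)) r :=
    by have := (FF_deriv hx1).comp r hden; exact this
  have h5 := h3.mul h4
  exact (h1.sub h2).add h5

lemma DD_abs_le {r : ℝ} (hr : 0 ≤ r) : |DD r| ≤ 22 / (1 + r ^ 2) := by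
  rcases eq_or_lt_of_le hr with h | h
  · subst h
    norm_num [DD]
  · have hx0 : (0:ℝ) < 1 + r ^ 2 := by positivity
    have hxne1 : (1:ℝ) + r ^ 2 ≠ 1 := by nlinarith
    have key : DD r = 4 * r / (1 + r ^ 2) ^ 2 - 4 * r * FF (1 + r ^ 2) / (1 + r ^ 2) ^ 2
        - 2 * Real.log (1 + r ^ 2) / (r * (1 + r ^ 2)) := by
      simp only [DD, phit, if_neg hxne1]
      field_simp
      ring
    set x := 1 + r ^ 2 with hxdef
    have hx1 : (1:ℝ) ≤ x := by nlinarith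
    have hsx : Real.sqrt x * Real.sqrt x = x := Real.mul_self_sqrt hx0.le
    have hsxpos : 0 < Real.sqrt x := Real.sqrt_pos.mpr hx0
    have hrsx : r ≤ Real.sqrt x := by
      have : r = Real.sqrt (r ^ 2) := by rw [Real.sqrt_sq hr]
      rw [this]
      exact Real.sqrt_le_sqrt (by nlinarith)
    have hlog0 : 0 ≤ Real.log x := Real.log_nonneg hx1
    have hlogle : Real.log x ≤ 2 * r := by
      have h1 : x ≤ (1 + r) ^ 2 := by nlinarith
      have h2 : Real.log x ≤ Real.log ((1 + r) ^ 2) := Real.log_le_log hx0 h1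
      have h3 : Real.log ((1 + r) ^ 2) = 2 * Real.log (1 + r) := by
        rw [Real.log_pow]; push_cast; ring
      have h4 : Real.log (1 + r) ≤ r := by
        have := Real.log_le_sub_one_of_pos (by linarith : (0:ℝ) < 1 + r)
        linarith
      linarith
    have hFF : |FF x| ≤ 4 * Real.sqrt x := FF_abs_le hx1
    have hA : |4 * r / x ^ 2| ≤ 2 / x := by
      rw [abs_of_nonneg (by positivity)]
      rw [div_le_div_iff₀ (by positivity) hx0]
      nlinarith [mul_nonneg (sq_nonneg (r - 1)) hx0.le, hxdef]
    have hB : |4 * r * FF x / x ^ 2| ≤ 16 / x := by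
      rw [abs_div, abs_of_nonneg (by positivity : (0:ℝ) ≤ x ^ 2), abs_mul,
        abs_of_nonneg (by positivity : (0:ℝ) ≤ 4 * r)]
      rw [div_le_div_iff₀ (by positivity) hx0]
      have h16 : 4 * r * |FF x| ≤ 16 * (r * Real.sqrt x) := by nlinarith
      have hrx : r * Real.sqrt x ≤ x := by nlinarith
      nlinarith [abs_nonneg (FF x)]
    have hC : |2 * Real.log x / (r * x)| ≤ 4 / x := by
      rw [abs_of_nonneg (by positivity)]
      rw [div_le_div_iff₀ (by positivity) hx0]
      nlinarith [mul_nonneg (by linarith : (0:ℝ) ≤ 2 * r - Real.log x) hx0.le]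
    rw [key]
    have htri : |4 * r / x ^ 2 - 4 * r * FF x / x ^ 2 - 2 * Real.log x / (r * x)|
        ≤ |4 * r / x ^ 2| + |4 * r * FF x / x ^ 2| + |2 * Real.log x / (r * x)| := by
      have t1 := abs_add_le (4 * r / x ^ 2 - 4 * r * FF x / x ^ 2) (-(2 * Real.log x / (r * x)))
      have t2 := abs_add_le (4 * r / x ^ 2) (-(4 * r * FF x / x ^ 2))
      simp only [abs_neg] at t1 t2
      calc |4 * r / x ^ 2 - 4 * r * FF x / x ^ 2 - 2 * Real.log x / (r * x)|
          = |(4 * r / x ^ 2 - 4 * r * FF x / x ^ 2) + -(2 * Real.log x / (r * x))| := by ring_nf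
        _ ≤ _ := by
            refine t1.trans ?_
            have : |4 * r / x ^ 2 - 4 * r * FF x / x ^ 2|
                = |4 * r / x ^ 2 + -(4 * r * FF x / x ^ 2)| := by ring_nf
            linarith [this ▸ t2]
    have : (2:ℝ) / x + 16 / x + 4 / x = 22 / x := by ring
    linarith [htri, hA, hB, hC]





lemma int_eq_FF (x : ℝ) : (∫ t in (1:ℝ)..x, Real.log t / (1 - t)) = FF x := by
  apply intervalIntegral.integral_congr_ae
  have h1 : ∀ᵐ (t : ℝ), t ≠ 1 := by
    rw [MeasureTheory.ae_iff]
    have hset : {a : ℝ | ¬ a ≠ 1} = {1} := by ext t; simp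
    rw [hset]
    exact Real.volume_singleton
  filter_upwards [h1] with t ht _
  simp [phit, if_neg ht]

lemma psi_zero : psi 0 = 0 := by
  simp [psi, FF]

/-- `w - η₀` is bounded on `[0,∞)`, and more precisely
`|w'(r) - η₀'(r)| ≤ C/(1+r²)` for all `r ≥ 0` and some constant `C`. -/
theorem stmt6 (η₀ w : ℝ → ℝ)
    (hη₀ : ∀ r, η₀ r = -Real.log (1 + r ^ 2))
    (hw : ∀ r, w r = η₀ r + 2 * r ^ 2 / (1 + r ^ 2) - (1 / 2) * (η₀ r) ^ 2
        + (1 - r ^ 2) / (1 + r ^ 2) * ∫ t in (1 : ℝ)..(1 + r ^ 2), Real.log t / (1 - t)) :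
    (∃ M : ℝ, ∀ r ≥ (0 : ℝ), |w r - η₀ r| ≤ M) ∧
    (∃ C : ℝ, ∀ r ≥ (0 : ℝ), |deriv w r - deriv η₀ r| ≤ C / (1 + r ^ 2)) := by
  have hweq : ∀ r, w r = η₀ r + psi r := by
    intro r
    rw [hw r, int_eq_FF, hη₀ r]
    simp only [psi]
    ring
  have heta : ∀ r, HasDerivAt η₀ (-((1 + r ^ 2)⁻¹ * (2 * r))) r := by
    intro r
    have hden : HasDerivAt (fun r : ℝ => 1 + r ^ 2) (2 * r) r := by
      simpa using (hasDerivAt_pow 2 r).const_add 1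
    have hx0 : (0:ℝ) < 1 + r ^ 2 := by positivity
    have h := ((Real.hasDerivAt_log (ne_of_gt hx0)).comp r hden).neg
    have heq : η₀ = fun r => -Real.log (1 + r ^ 2) := funext hη₀
    rw [heq]
    exact h
  constructor
  · -- boundedness, via comparison with arctan
    refine ⟨44, fun r hr => ?_⟩
    have key : ∀ s ≥ (0:ℝ), |psi s| ≤ 44 := by
      intro s hs
      have harc2 : ∀ y : ℝ, Real.arctan y ≤ 2 := by
        intro y
        have h1 := Real.arctan_lt_pi_div_two y
        have h2 := Real.pi_lt_d2
        linarith
      have mono : ∀ (c : ℝ), c = 1 ∨ c = -1 →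
          MonotoneOn (fun y => 22 * Real.arctan y + c * psi y) (Set.Ici 0) := by
        intro c hc
        have hder : ∀ y : ℝ, HasDerivAt (fun y => 22 * Real.arctan y + c * psi y)
            (22 * (1 / (1 + y ^ 2)) + c * DD y) y := by
          intro y
          exact ((Real.hasDerivAt_arctan y).const_mul 22).add ((psi_hasDeriv y).const_mul c)
        apply monotoneOn_of_deriv_nonneg (convex_Ici 0)
        · exact fun y _ => ((hder y).differentiableAt.continuousAt).continuousWithinAt
        · intro y hy
          exact ((hder y).differentiableAt).differentiableWithinAt
        · intro y hy
          rw [interior_Ici] at hy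
          rw [(hder y).deriv]
          have hb := DD_abs_le (le_of_lt hy)
          have h22 : |DD y| ≤ 22 * (1 / (1 + y ^ 2)) := by
            rw [mul_one_div]
            exact hb
          rcases hc with hc | hc <;> subst hc <;>
            cases abs_le.mp h22 with
            | intro hl hu => nlinarith
      have h1 := mono 1 (Or.inl rfl) Set.self_mem_Ici (Set.mem_Ici.mpr hs) hs
      have h2 := mono (-1) (Or.inr rfl) Set.self_mem_Ici (Set.mem_Ici.mpr hs) hs
      simp only [Real.arctan_zero, psi_zero, mul_zero, add_zero, one_mul, neg_mul, neg_zero] at h1 h2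
      have harc := harc2 s
      rw [abs_le]
      constructor <;> nlinarith
    rw [hweq r]
    simpa using key r hr
  · -- derivative bound
    refine ⟨22, fun r hr => ?_⟩
    have hwfun : w = fun r => η₀ r + psi r := funext hweq
    have hwd : HasDerivAt w (-((1 + r ^ 2)⁻¹ * (2 * r)) + DD r) r := by
      rw [hwfun]
      exact (heta r).add (psi_hasDeriv r)
    rw [hwd.deriv, (heta r).deriv]
    simpa using DD_abs_le hr
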